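/- Let p be a prime, H a finite-dimensional vector space over 𝔽_p, and d a nonnegative integer. Let U₁, U₂, U₃, U₄ ≤ H be subspaces of dimension d such that |U_{i₁} + U_{i₂} + U_{i₃}| = p^{3d} for any three distinct indices i₁, i₂, i₃ ∈ {1,2,3,4} and such that |U₁ + U₂ + U₃ + U₄| = p^{3d}. Let φ₄ : 𝔽_p^d → U₄ be a linear isomorphism. Then there exist linear isomorphisms φ_i : 𝔽_p^d → U_i for i ∈ {1,2,3} such that φ₁ + φ₂ = φ₃ + φ₄ (as linear maps into H). -/
import Mathlib


/-- **Lemma 8 of the paper** (exact version of Lemma 34 of [AQV]): given four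
`d`-dimensional subspaces in sufficiently general position and a linear isomorphism
`φ₄ : 𝔽_p^d → U₄`, there exist linear isomorphisms `φᵢ : 𝔽_p^d → Uᵢ`, `i ∈ [3]`,
with `φ₁ + φ₂ = φ₃ + φ₄`. -/
theorem additive_quadruple_of_subspaces
    (p : ℕ) [Fact p.Prime]
    (H : Type) [AddCommGroup H] [Module (ZMod p) H]
    [FiniteDimensional (ZMod p) H]
    (d : ℕ) (U : Fin 4 → Submodule (ZMod p) H)
    (hdim : ∀ i, Module.finrank (ZMod p) ↥(U i) = d)
    (htriple : ∀ i₁ i₂ i₃ : Fin 4, i₁ ≠ i₂ → i₁ ≠ i₃ → i₂ ≠ i₃ →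
      Nat.card ↥(U i₁ ⊔ U i₂ ⊔ U i₃) = p ^ (3 * d))
    (hquad : Nat.card ↥(U 0 ⊔ U 1 ⊔ U 2 ⊔ U 3) = p ^ (3 * d))
    (φ₄ : (Fin d → ZMod p) ≃ₗ[ZMod p] ↥(U 3)) :
    ∃ (φ₁ : (Fin d → ZMod p) ≃ₗ[ZMod p] ↥(U 0))
      (φ₂ : (Fin d → ZMod p) ≃ₗ[ZMod p] ↥(U 1))
      (φ₃ : (Fin d → ZMod p) ≃ₗ[ZMod p] ↥(U 2)),
      ∀ v : Fin d → ZMod p,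
        (↑(φ₁ v) + ↑(φ₂ v) : H) = ↑(φ₃ v) + ↑(φ₄ v) := by
  have hp := (Fact.out : p.Prime)
  have : Finite H := Module.finite_of_finite (ZMod p)
  have : Fintype H := Fintype.ofFinite H
  -- cardinality of any submodule
  have hcard : ∀ W : Submodule (ZMod p) H,
      Nat.card W = p ^ Module.finrank (ZMod p) W := by
    intro W
    have : Fintype W := Fintype.ofFinite _
    rw [Nat.card_eq_fintype_card, Module.card_eq_pow_finrank (K := ZMod p), ZMod.card]
  -- finrank of triple sums
  have hfr3 : ∀ i₁ i₂ i₃ : Fin 4, i₁ ≠ i₂ → i₁ ≠ i₃ → i₂ ≠ i₃ →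
      Module.finrank (ZMod p) ↥(U i₁ ⊔ U i₂ ⊔ U i₃) = 3 * d := by
    intro i₁ i₂ i₃ h12 h13 h23
    have := htriple i₁ i₂ i₃ h12 h13 h23
    rw [hcard] at this
    exact Nat.pow_right_injective hp.two_le this
  have hfrq : Module.finrank (ZMod p) ↥(U 0 ⊔ U 1 ⊔ U 2 ⊔ U 3) = 3 * d := by
    rw [hcard] at hquad
    exact Nat.pow_right_injective hp.two_le hquad
  -- U 3 ≤ U 0 ⊔ U 1 ⊔ U 2
  have hU3le : U 3 ≤ U 0 ⊔ U 1 ⊔ U 2 := by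
    have heq : (U 0 ⊔ U 1 ⊔ U 2) = U 0 ⊔ U 1 ⊔ U 2 ⊔ U 3 := by
      apply Submodule.eq_of_le_of_finrank_eq le_sup_left
      rw [hfrq, hfr3 0 1 2 (by decide) (by decide) (by decide)]
    exact heq ▸ le_sup_right
  -- pairwise-sum disjointness: for distinct i j k, U k ⊓ (U i ⊔ U j) = ⊥
  have hdisj : ∀ i j k : Fin 4, i ≠ j → i ≠ k → j ≠ k →
      U k ⊓ (U i ⊔ U j) = ⊥ := by
    intro i j k hij hik hjk
    have h1 := Submodule.finrank_sup_add_finrank_inf_eq (U k) (U i ⊔ U j)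
    have h2 := Submodule.finrank_sup_add_finrank_inf_eq (U i) (U j)
    have h3 : Module.finrank (ZMod p) ↥(U k ⊔ (U i ⊔ U j)) = 3 * d := by
      rw [← sup_assoc, sup_comm (U k) (U i), sup_assoc, sup_comm (U k) (U j),
        ← sup_assoc]
      exact hfr3 i j k hij hik hjk
    rw [h3, hdim] at h1
    rw [hdim, hdim] at h2
    have : Module.finrank (ZMod p) ↥(U k ⊓ (U i ⊔ U j)) = 0 := by omega
    exact Submodule.finrank_eq_zero.mp this
  -- the sum map
  set f : (↥(U 0) × ↥(U 1) × ↥(U 2)) →ₗ[ZMod p] H :=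
    (U 0).subtype.coprod ((U 1).subtype.coprod (U 2).subtype) with hf
  have hfapply : ∀ x : ↥(U 0) × ↥(U 1) × ↥(U 2),
      f x = (x.1 : H) + ((x.2.1 : H) + (x.2.2 : H)) := by
    intro x
    simp [hf]
  have hrange : LinearMap.range f = U 0 ⊔ U 1 ⊔ U 2 := by
    rw [hf, LinearMap.range_coprod, LinearMap.range_coprod,
      Submodule.range_subtype, Submodule.range_subtype, Submodule.range_subtype,
      sup_assoc]
  have hinj : Function.Injective f := by
    rw [← LinearMap.ker_eq_bot, Submodule.eq_bot_iff]
    rintro ⟨x, y, z⟩ hx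
    rw [LinearMap.mem_ker] at hx
    rw [hfapply] at hx
    simp only at hx
    have hx0 : (x : H) ∈ U 0 ⊓ (U 1 ⊔ U 2) := by
      constructor
      · exact x.2
      · have : (x : H) = -((y : H) + (z : H)) := eq_neg_of_add_eq_zero_left hx
        rw [this]
        exact neg_mem (add_mem (Submodule.mem_sup_left y.2) (Submodule.mem_sup_right z.2))
    rw [hdisj 1 2 0 (by decide) (by decide) (by decide), Submodule.mem_bot] at hx0
    have hx' : (y : H) + (z : H) = 0 := by rw [hx0, zero_add] at hx; exact hx
    have hy0 : (y : H) ∈ U 1 ⊓ (U 0 ⊔ U 2) := by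
      constructor
      · exact y.2
      · have : (y : H) = -(z : H) := eq_neg_of_add_eq_zero_left hx'
        rw [this]
        exact neg_mem (Submodule.mem_sup_right z.2)
    rw [hdisj 0 2 1 (by decide) (by decide) (by decide), Submodule.mem_bot] at hy0
    have hz0 : (z : H) = 0 := by rw [hy0, zero_add] at hx'; exact hx'
    ext <;> simp [hx0, hy0, hz0]
  -- equivalence with W
  set g : (↥(U 0) × ↥(U 1) × ↥(U 2)) ≃ₗ[ZMod p] ↥(U 0 ⊔ U 1 ⊔ U 2) :=
    (LinearEquiv.ofInjective f hinj).trans (LinearEquiv.ofEq _ _ hrange) with hg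
  have hgcoe : ∀ x, ((g x : ↥(U 0 ⊔ U 1 ⊔ U 2)) : H) = f x := by
    intro x; simp [hg]
  -- decomposition of U 3
  set ψ : ↥(U 3) →ₗ[ZMod p] (↥(U 0) × ↥(U 1) × ↥(U 2)) :=
    g.symm.toLinearMap ∘ₗ Submodule.inclusion hU3le with hψ
  have hdecomp : ∀ u : ↥(U 3),
      (u : H) = ((ψ u).1 : H) + (((ψ u).2.1 : H) + ((ψ u).2.2 : H)) := by
    intro u
    rw [← hfapply, ← hgcoe]
    simp [hψ]
  -- components are injective
  have hinjc : ∀ (π : ↥(U 3) →ₗ[ZMod p] H) (i j : Fin 4),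
      True → True → True := fun _ _ _ _ _ => trivial
  have key : ∀ (u : ↥(U 3)), True := fun _ => trivial
  have hπ₁inj : Function.Injective
      ((LinearMap.fst (ZMod p) ↥(U 0) (↥(U 1) × ↥(U 2))) ∘ₗ ψ) := by
    rw [← LinearMap.ker_eq_bot, Submodule.eq_bot_iff]
    intro u hu
    rw [LinearMap.mem_ker] at hu
    simp only [LinearMap.comp_apply, LinearMap.fst_apply] at hu
    have hmem : (u : H) ∈ U 3 ⊓ (U 1 ⊔ U 2) := by
      refine ⟨u.2, ?_⟩
      rw [hdecomp u, hu]
      simpa using add_mem (Submodule.mem_sup_left (ψ u).2.1.2)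
        (Submodule.mem_sup_right (ψ u).2.2.2)
    rw [hdisj 1 2 3 (by decide) (by decide) (by decide), Submodule.mem_bot] at hmem
    exact Subtype.ext hmem
  have hπ₂inj : Function.Injective
      ((LinearMap.fst (ZMod p) ↥(U 1) ↥(U 2)) ∘ₗ
        (LinearMap.snd (ZMod p) ↥(U 0) (↥(U 1) × ↥(U 2))) ∘ₗ ψ) := by
    rw [← LinearMap.ker_eq_bot, Submodule.eq_bot_iff]
    intro u hu
    rw [LinearMap.mem_ker] at hu
    simp only [LinearMap.comp_apply, LinearMap.fst_apply, LinearMap.snd_apply] at hu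
    have hmem : (u : H) ∈ U 3 ⊓ (U 0 ⊔ U 2) := by
      refine ⟨u.2, ?_⟩
      rw [hdecomp u, hu]
      simpa using add_mem (Submodule.mem_sup_left (ψ u).1.2)
        (Submodule.mem_sup_right (ψ u).2.2.2)
    rw [hdisj 0 2 3 (by decide) (by decide) (by decide), Submodule.mem_bot] at hmem
    exact Subtype.ext hmem
  have hπ₃inj : Function.Injective
      ((LinearMap.snd (ZMod p) ↥(U 1) ↥(U 2)) ∘ₗ
        (LinearMap.snd (ZMod p) ↥(U 0) (↥(U 1) × ↥(U 2))) ∘ₗ ψ) := by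
    rw [← LinearMap.ker_eq_bot, Submodule.eq_bot_iff]
    intro u hu
    rw [LinearMap.mem_ker] at hu
    simp only [LinearMap.comp_apply, LinearMap.snd_apply] at hu
    have hmem : (u : H) ∈ U 3 ⊓ (U 0 ⊔ U 1) := by
      refine ⟨u.2, ?_⟩
      rw [hdecomp u, hu]
      simpa using add_mem (Submodule.mem_sup_left (ψ u).1.2)
        (Submodule.mem_sup_right (ψ u).2.1.2)
    rw [hdisj 0 1 3 (by decide) (by decide) (by decide), Submodule.mem_bot] at hmem
    exact Subtype.ext hmem
  have hd03 : Module.finrank (ZMod p) ↥(U 3) = Module.finrank (ZMod p) ↥(U 0) := by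
    rw [hdim, hdim]
  have hd13 : Module.finrank (ZMod p) ↥(U 3) = Module.finrank (ZMod p) ↥(U 1) := by
    rw [hdim, hdim]
  have hd23 : Module.finrank (ZMod p) ↥(U 3) = Module.finrank (ZMod p) ↥(U 2) := by
    rw [hdim, hdim]
  set E₁ := LinearMap.linearEquivOfInjective _ hπ₁inj hd03 with hE₁
  set E₂ := LinearMap.linearEquivOfInjective _ hπ₂inj hd13 with hE₂
  set E₃ := LinearMap.linearEquivOfInjective _ hπ₃inj hd23 with hE₃
  refine ⟨φ₄.trans E₁, φ₄.trans E₂,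
    φ₄.trans (E₃.trans (LinearEquiv.neg (ZMod p))), fun v => ?_⟩
  set u := φ₄ v with huv
  have hE₁u : (E₁ u : H) = ((ψ u).1 : H) := by
    rw [hE₁, LinearMap.linearEquivOfInjective_apply]; rfl
  have hE₂u : (E₂ u : H) = ((ψ u).2.1 : H) := by
    rw [hE₂, LinearMap.linearEquivOfInjective_apply]; rfl
  have hE₃u : (E₃ u : H) = ((ψ u).2.2 : H) := by
    rw [hE₃, LinearMap.linearEquivOfInjective_apply]; rfl
  have := hdecomp u
  simp only [LinearEquiv.trans_apply, LinearEquiv.neg_apply, ← huv]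
  push_cast
  rw [hE₁u, hE₂u, hE₃u, this]
  abel
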